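/- Let F be a field containing a primitive e-th root of unity λ, and let e, g, d, j, v_1, v_2 be positive integers with v_1, v_2 > 1, v_1 v_2 ∣ g, g ∣ e, d ∣ e, gcd(v_1, v_2) = gcd(e, j) = gcd(v_1, d) = gcd(v_2, d) = 1. Let G ≤ GL_2(F) be the subgroup generated by the diagonal matrices A = diag(λ^{v_1}, λ^{j v_2}) and B = diag(λ^{g}, λ^{d g}). Then the minimal degree of invariants of G satisfies M_G = min{ a_1 + a_2 : a_1, a_2 ∈ ℕ, a_1 + a_2 > 0, v_1 a_1 + j v_2 a_2 ≡ 0 (mod e), g a_1 + d g a_2 ≡ 0 (mod e) }. -/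

import Mathlib

open MvPolynomial Matrix

/-- The action of `g ∈ GL_2(F)` on polynomials: `(g · f)(v) = f(g⁻¹ v)`. -/
noncomputable def glAct {n : ℕ} {F : Type} [Field F] (g : GL (Fin n) F)
    (f : MvPolynomial (Fin n) F) : MvPolynomial (Fin n) F :=
  aeval (fun i => ∑ j, ((g⁻¹ : GL (Fin n) F) : Matrix (Fin n) (Fin n) F) i j • X j) f

lemma coeff_aeval_smulX {F : Type} [CommSemiring F] {n : ℕ} (c : Fin n → F)
    (f : MvPolynomial (Fin n) F) (μ : Fin n →₀ ℕ) :
    coeff μ (aeval (fun i => c i • X i) f) = (∏ i ∈ μ.support, c i ^ μ i) * coeff μ f := by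
  induction f using MvPolynomial.induction_on' with
  | monomial ν a =>
    rw [aeval_monomial]
    have : (ν.prod fun i k => (c i • X i) ^ k)
        = C (∏ i ∈ ν.support, c i ^ ν i) * (ν.prod fun i k => (X i : MvPolynomial (Fin n) F) ^ k) := by
      rw [Finsupp.prod, Finsupp.prod, map_prod, ← Finset.prod_mul_distrib]
      refine Finset.prod_congr rfl fun i _ => ?_
      rw [smul_pow, smul_eq_C_mul]
    rw [this, algebraMap_eq, ← mul_assoc, ← _root_.map_mul, ← monomial_eq, coeff_monomial, coeff_monomial]
    split_ifs with h
    · subst h; ring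
    · ring
  | add p q hp hq => rw [map_add, coeff_add, coeff_add, hp, hq, mul_add]

lemma glAct_mul {n : ℕ} {F : Type} [Field F] (x y : GL (Fin n) F)
    (f : MvPolynomial (Fin n) F) : glAct (x * y) f = glAct x (glAct y f) := by
  unfold glAct
  rw [← AlgHom.comp_apply, comp_aeval]
  have hfun : (fun i => ∑ k, (((x*y)⁻¹ : GL (Fin n) F) : Matrix (Fin n) (Fin n) F) i k • (X k : MvPolynomial (Fin n) F))
      = fun i => aeval (fun i => ∑ j, ((x⁻¹ : GL (Fin n) F) : Matrix (Fin n) (Fin n) F) i j • (X j : MvPolynomial (Fin n) F))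
          (∑ j, ((y⁻¹ : GL (Fin n) F) : Matrix (Fin n) (Fin n) F) i j • (X j : MvPolynomial (Fin n) F)) := by
    funext i
    simp only [map_sum, _root_.map_smul, aeval_X, _root_.mul_inv_rev, Units.val_mul,
      Matrix.mul_apply, Finset.sum_smul, Finset.smul_sum, smul_smul]
    rw [Finset.sum_comm]
  rw [hfun]

lemma glAct_one {n : ℕ} {F : Type} [Field F] (f : MvPolynomial (Fin n) F) :
    glAct (1 : GL (Fin n) F) f = f := by
  unfold glAct
  rw [inv_one]
  have h1 : (fun i => ∑ j, ((1 : GL (Fin n) F) : Matrix (Fin n) (Fin n) F) i j • (X j : MvPolynomial (Fin n) F)) = X := by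
    funext i
    simp [Matrix.one_apply, ite_smul, Finset.sum_ite_eq]
  rw [h1, aeval_X_left_apply]

lemma glAct_inv_diag {n : ℕ} {F : Type} [Field F] (x : GL (Fin n) F) (w : Fin n → F)
    (hx : (x : Matrix (Fin n) (Fin n) F) = diagonal w) (f : MvPolynomial (Fin n) F) :
    glAct x⁻¹ f = aeval (fun i => w i • X i) f := by
  unfold glAct
  rw [inv_inv]
  have h1 : (fun i => ∑ j, (x : Matrix (Fin n) (Fin n) F) i j • (X j : MvPolynomial (Fin n) F))
      = fun i => w i • X i := by
    funext i
    rw [hx]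
    simp [Matrix.diagonal_apply, ite_smul, Finset.sum_ite_eq]
  rw [h1]

lemma prod_support_eq_univ {M : Type} [CommMonoid M] {n : ℕ} (c : Fin n → M) (μ : Fin n →₀ ℕ) :
    ∏ i ∈ μ.support, c i ^ μ i = ∏ i, c i ^ μ i :=
  Finset.prod_subset (Finset.subset_univ _)
    (fun i _ h => by rw [Finsupp.notMem_support_iff.mp h, pow_zero])

/-- invariance under a diagonal element of the closure forces divisibility on exponents -/
lemma diag_invariant_dvd {F : Type} [Field F] {e : ℕ} {lam : F} (hlam : IsPrimitiveRoot lam e)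
    (c₀ c₁ : ℕ) (x : GL (Fin 2) F)
    (hx : (x : Matrix (Fin 2) (Fin 2) F) = diagonal ![lam ^ c₀, lam ^ c₁])
    (f : MvPolynomial (Fin 2) F) (hinv : glAct x⁻¹ f = f)
    (μ : Fin 2 →₀ ℕ) (hμ : coeff μ f ≠ 0) : e ∣ c₀ * μ 0 + c₁ * μ 1 := by
  rw [glAct_inv_diag x _ hx f] at hinv
  have h1 := congrArg (coeff μ) hinv
  rw [coeff_aeval_smulX, prod_support_eq_univ, Fin.prod_univ_two] at h1
  have h2 : (![lam ^ c₀, lam ^ c₁] 0) ^ μ 0 * (![lam ^ c₀, lam ^ c₁] 1) ^ μ 1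
      = lam ^ (c₀ * μ 0 + c₁ * μ 1) := by
    simp [← pow_mul, ← pow_add]
  rw [h2] at h1
  have h3 : lam ^ (c₀ * μ 0 + c₁ * μ 1) = 1 := by
    have := mul_right_cancel₀ hμ (h1.trans (one_mul (coeff μ f)).symm)
    exact this
  exact (hlam.pow_eq_one_iff_dvd _).mp h3

/-- the monomial X0^a₁ X1^a₂ is invariant under a diagonal element when the dvd condition holds -/
lemma diag_dvd_invariant {F : Type} [Field F] {e : ℕ} {lam : F} (hlam : IsPrimitiveRoot lam e)
    (c₀ c₁ a₁ a₂ : ℕ) (x : GL (Fin 2) F)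
    (hx : (x : Matrix (Fin 2) (Fin 2) F) = diagonal ![lam ^ c₀, lam ^ c₁])
    (hdvd : e ∣ c₀ * a₁ + c₁ * a₂) :
    glAct x ((X 0 : MvPolynomial (Fin 2) F) ^ a₁ * X 1 ^ a₂)
      = (X 0 : MvPolynomial (Fin 2) F) ^ a₁ * X 1 ^ a₂ := by
  set f : MvPolynomial (Fin 2) F := (X 0 : MvPolynomial (Fin 2) F) ^ a₁ * X 1 ^ a₂ with hf
  have hAinv : glAct x⁻¹ f = f := by
    rw [glAct_inv_diag x _ hx f, hf]
    rw [_root_.map_mul, map_pow, map_pow, aeval_X, aeval_X, smul_pow, smul_pow,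
      smul_mul_smul_comm]
    have : (![lam ^ c₀, lam ^ c₁] 0) ^ a₁ * (![lam ^ c₀, lam ^ c₁] 1) ^ a₂ = 1 := by
      have : lam ^ (c₀ * a₁ + c₁ * a₂) = 1 := (hlam.pow_eq_one_iff_dvd _).mpr hdvd
      simpa [← pow_mul, ← pow_add] using this
    rw [this, one_smul]
  have := congrArg (glAct x) hAinv
  rw [← glAct_mul, mul_inv_cancel, glAct_one] at this
  exact this.symm

/-- For the subgroup `G ≤ GL_2(F)` generated by `A = diag(λ^{v₁}, λ^{jv₂})` and
`B = diag(λ^{g}, λ^{dg})` (`λ` a primitive `e`-th root of unity), the minimal degree of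
invariants of `G` is the least `a₁ + a₂ > 0` with `v₁a₁ + jv₂a₂ ≡ 0 (mod e)` and
`ga₁ + dga₂ ≡ 0 (mod e)`. -/
theorem stmt12 {F : Type} [Field F] (e g d j v₁ v₂ : ℕ)
    (he : 0 < e) (hgpos : 0 < g) (hd : 0 < d) (hj : 0 < j)
    (hv₁ : 1 < v₁) (hv₂ : 1 < v₂)
    (hv₁v₂g : v₁ * v₂ ∣ g) (hge : g ∣ e) (hde : d ∣ e)
    (h₁ : Nat.gcd v₁ v₂ = 1) (h₂ : Nat.gcd e j = 1)
    (h₃ : Nat.gcd v₁ d = 1) (h₄ : Nat.gcd v₂ d = 1)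
    (lam : F) (hlam : IsPrimitiveRoot lam e)
    (A B : GL (Fin 2) F)
    (hA : (A : Matrix (Fin 2) (Fin 2) F) = diagonal ![lam ^ v₁, lam ^ (j * v₂)])
    (hB : (B : Matrix (Fin 2) (Fin 2) F) = diagonal ![lam ^ g, lam ^ (d * g)]) :
    IsLeast {m : ℕ | 0 < m ∧ ∃ f : MvPolynomial (Fin 2) F, f ≠ 0 ∧ f.IsHomogeneous m ∧
        ∀ x ∈ Subgroup.closure {A, B}, glAct x f = f}
      (sInf {m : ℕ | 0 < m ∧ ∃ a₁ a₂ : ℕ, a₁ + a₂ = m ∧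
        e ∣ v₁ * a₁ + j * v₂ * a₂ ∧ e ∣ g * a₁ + d * g * a₂}) := by
  have hAmem : A ∈ Subgroup.closure {A, B} :=
    Subgroup.subset_closure (Set.mem_insert _ _)
  have hBmem : B ∈ Subgroup.closure {A, B} :=
    Subgroup.subset_closure (Set.mem_insert_of_mem _ rfl)
  have hseteq : {m : ℕ | 0 < m ∧ ∃ f : MvPolynomial (Fin 2) F, f ≠ 0 ∧ f.IsHomogeneous m ∧
        ∀ x ∈ Subgroup.closure {A, B}, glAct x f = f}
      = {m : ℕ | 0 < m ∧ ∃ a₁ a₂ : ℕ, a₁ + a₂ = m ∧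
        e ∣ v₁ * a₁ + j * v₂ * a₂ ∧ e ∣ g * a₁ + d * g * a₂} := by
    ext m
    constructor
    · rintro ⟨hm, f, hf0, hhom, hinv⟩
      obtain ⟨μ, hμ⟩ := (MvPolynomial.support_nonempty.mpr hf0)
      have hcoeff : coeff μ f ≠ 0 := MvPolynomial.mem_support_iff.mp hμ
      have hdeg : μ.degree = m := by
        by_contra h
        exact hcoeff (hhom.coeff_eq_zero h)
      have hdeg2 : μ 0 + μ 1 = m := by
        rw [← hdeg, Finsupp.degree_apply]
        rw [show (∑ i ∈ μ.support, μ i) = ∑ i, μ i from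
          Finset.sum_subset (Finset.subset_univ _)
            (fun i _ h => Finsupp.notMem_support_iff.mp h), Fin.sum_univ_two]
      refine ⟨hm, μ 0, μ 1, hdeg2, ?_, ?_⟩
      · have := diag_invariant_dvd hlam v₁ (j * v₂) A hA f
          (hinv _ (Subgroup.inv_mem _ hAmem)) μ hcoeff
        convert this using 2 <;> ring
      · have := diag_invariant_dvd hlam g (d * g) B hB f
          (hinv _ (Subgroup.inv_mem _ hBmem)) μ hcoeff
        convert this using 2 <;> ring
    · rintro ⟨hm, a₁, a₂, hsum, hdvd1, hdvd2⟩
      refine ⟨hm, (X 0 : MvPolynomial (Fin 2) F) ^ a₁ * X 1 ^ a₂, ?_, ?_, ?_⟩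
      · rw [X_pow_eq_monomial, X_pow_eq_monomial, monomial_mul, one_mul]
        simp [MvPolynomial.monomial_eq_zero]
      · have := ((isHomogeneous_X F (0 : Fin 2)).pow a₁).mul
          ((isHomogeneous_X F (1 : Fin 2)).pow a₂)
        simpa [hsum] using this
      · intro x hx
        induction hx using Subgroup.closure_induction with
        | mem x hx =>
          rcases hx with h | h
          · subst h
            exact diag_dvd_invariant hlam v₁ (j * v₂) a₁ a₂ x hA
              (by convert hdvd1 using 2 <;> ring)
          · subst h
            exact diag_dvd_invariant hlam g (d * g) a₁ a₂ x hB
              (by convert hdvd2 using 2 <;> ring)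
        | one => exact glAct_one _
        | mul x y hx hy ihx ihy => rw [glAct_mul, ihy, ihx]
        | inv x hx ihx =>
          have := congrArg (glAct x⁻¹) ihx
          rw [← glAct_mul, inv_mul_cancel, glAct_one] at this
          exact this.symm
  rw [hseteq]
  have hne : {m : ℕ | 0 < m ∧ ∃ a₁ a₂ : ℕ, a₁ + a₂ = m ∧
      e ∣ v₁ * a₁ + j * v₂ * a₂ ∧ e ∣ g * a₁ + d * g * a₂}.Nonempty := by
    refine ⟨e + e, by positivity, e, e, rfl, ?_, ?_⟩
    · exact dvd_add (dvd_mul_left e _) (dvd_mul_left e _)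
    · exact dvd_add (dvd_mul_left e _) (dvd_mul_left e _)
  exact ⟨Nat.sInf_mem hne, fun b hb => Nat.sInf_le hb⟩
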